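/- The ring homomorphism ℤ[X,Y] → ℤ[T] × ℤ[T] sending a polynomial h(X,Y) to the pair (h(T,0), h(T,−T)) has kernel equal to the principal ideal generated by Y·(X+Y), and its image is exactly the subring {(f,g) ∈ ℤ[T] × ℤ[T] : f(0) = g(0)}. Consequently ℤ[X,Y]/(Y·(X+Y)) is isomorphic to the fiber product of two copies of ℤ[T] over ℤ, both structure maps being evaluation at 0. -/

import Mathlib

open MvPolynomial

noncomputable def substHom : MvPolynomial (Fin 2) ℤ →+* Polynomial ℤ × Polynomial ℤ :=
  RingHom.prod
    ((aeval ![Polynomial.X, 0] : MvPolynomial (Fin 2) ℤ →ₐ[ℤ] Polynomial ℤ) : MvPolynomial (Fin 2) ℤ →+* Polynomial ℤ)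
    ((aeval ![Polynomial.X, -Polynomial.X] : MvPolynomial (Fin 2) ℤ →ₐ[ℤ] Polynomial ℤ) : MvPolynomial (Fin 2) ℤ →+* Polynomial ℤ)

noncomputable def fiberProd : Subring (Polynomial ℤ × Polynomial ℤ) :=
  RingHom.eqLocus
    ((Polynomial.evalRingHom (0 : ℤ)).comp (RingHom.fst (Polynomial ℤ) (Polynomial ℤ)))
    ((Polynomial.evalRingHom (0 : ℤ)).comp (RingHom.snd (Polynomial ℤ) (Polynomial ℤ)))

noncomputable def eE : MvPolynomial (Fin 2) ℤ ≃ₐ[ℤ] Polynomial (Polynomial ℤ) :=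
  (renameEquiv ℤ (Equiv.swap 0 1)).trans
    ((finSuccEquiv ℤ 1).trans (Polynomial.mapAlgEquiv
      ((renameEquiv ℤ (Equiv.equivPUnit.{1,1} (Fin 1))).trans (pUnitAlgEquiv ℤ))))

lemma eE_X0 : eE (X 0) = Polynomial.C Polynomial.X := by
  have h1 : eE (X 0) = Polynomial.mapAlgEquiv
      ((renameEquiv ℤ (Equiv.equivPUnit.{1,1} (Fin 1))).trans (pUnitAlgEquiv ℤ))
      (finSuccEquiv ℤ 1 (X ((0 : Fin 1).succ))) := by
    simp [eE, Equiv.swap_apply_left]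
  rw [h1, finSuccEquiv_X_succ]
  simp

lemma eE_X1 : eE (X 1) = Polynomial.X := by
  simp [eE, Equiv.swap_apply_right, finSuccEquiv_X_zero]

lemma eE_C (r : ℤ) : eE (C r) = Polynomial.C (Polynomial.C r) := by
  simp [eE]

lemma aeval_eq_eval (h : MvPolynomial (Fin 2) ℤ) :
    aeval ![Polynomial.X, 0] h = (eE h).eval 0 ∧
    aeval ![Polynomial.X, -Polynomial.X] h = (eE h).eval (-Polynomial.X) := by
  have k1 : ((aeval ![Polynomial.X, 0] : MvPolynomial (Fin 2) ℤ →ₐ[ℤ] Polynomial ℤ) :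
      MvPolynomial (Fin 2) ℤ →+* Polynomial ℤ) =
      (Polynomial.evalRingHom (0 : Polynomial ℤ)).comp (eE : MvPolynomial (Fin 2) ℤ →+* Polynomial (Polynomial ℤ)) := by
    apply MvPolynomial.ringHom_ext
    · intro r; simp [eE_C]
    · intro i
      refine Fin.cases ?_ (fun j => ?_) i
      · simp [eE_X0]
      · have : (j.succ : Fin 2) = 1 := by fin_cases j; rfl
        rw [this]; simp [eE_X1]
  have k2 : ((aeval ![Polynomial.X, -Polynomial.X] : MvPolynomial (Fin 2) ℤ →ₐ[ℤ] Polynomial ℤ) :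
      MvPolynomial (Fin 2) ℤ →+* Polynomial ℤ) =
      (Polynomial.evalRingHom (-Polynomial.X : Polynomial ℤ)).comp (eE : MvPolynomial (Fin 2) ℤ →+* Polynomial (Polynomial ℤ)) := by
    apply MvPolynomial.ringHom_ext
    · intro r; simp [eE_C]
    · intro i
      refine Fin.cases ?_ (fun j => ?_) i
      · simp [eE_X0]
      · have : (j.succ : Fin 2) = 1 := by fin_cases j; rfl
        rw [this]; simp [eE_X1]
  constructor
  · exact congrArg (fun f => f h) (congrArg DFunLike.coe k1)
  · exact congrArg (fun f => f h) (congrArg DFunLike.coe k2)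

theorem substHom_ker_range :
    RingHom.ker substHom = Ideal.span {(X 1 * (X 0 + X 1) : MvPolynomial (Fin 2) ℤ)} ∧
    substHom.range = fiberProd ∧
    Nonempty ((MvPolynomial (Fin 2) ℤ ⧸
      Ideal.span {(X 1 * (X 0 + X 1) : MvPolynomial (Fin 2) ℤ)}) ≃+* fiberProd) := by
  have memker : ∀ h : MvPolynomial (Fin 2) ℤ, h ∈ RingHom.ker substHom ↔
      (eE h).eval 0 = 0 ∧ (eE h).eval (-Polynomial.X) = 0 := by
    intro h
    rw [RingHom.mem_ker]
    have := aeval_eq_eval h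
    constructor
    · intro hz
      have h1 : aeval ![Polynomial.X, 0] h = 0 := congrArg Prod.fst hz
      have h2 : aeval ![Polynomial.X, -Polynomial.X] h = 0 := congrArg Prod.snd hz
      exact ⟨this.1 ▸ h1, this.2 ▸ h2⟩
    · intro ⟨h1, h2⟩
      have : substHom h = (aeval ![Polynomial.X, 0] h, aeval ![Polynomial.X, -Polynomial.X] h) := rfl
      rw [this, Prod.mk_eq_zero]
      exact ⟨(aeval_eq_eval h).1.trans h1, (aeval_eq_eval h).2.trans h2⟩
  have hker : RingHom.ker substHom = Ideal.span {(X 1 * (X 0 + X 1) : MvPolynomial (Fin 2) ℤ)} := by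
    ext h
    rw [memker h, Ideal.mem_span_singleton]
    constructor
    · rintro ⟨h1, h2⟩
      -- X ∣ eE h
      have d1 : Polynomial.X ∣ eE h := by
        rw [Polynomial.X_dvd_iff, Polynomial.coeff_zero_eq_eval_zero]; exact h1
      obtain ⟨Q, hQ⟩ := d1
      have h2' : (-Polynomial.X) * Q.eval (-Polynomial.X) = 0 := by
        have := h2
        rw [hQ, Polynomial.eval_mul, Polynomial.eval_X] at this
        exact this
      have hQ0 : Q.eval (-Polynomial.X) = 0 := by
        rcases mul_eq_zero.mp h2' with h | h
        · exact absurd h (by simpa using Polynomial.X_ne_zero (R := ℤ))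
        · exact h
      have d2 : (Polynomial.X + Polynomial.C Polynomial.X) ∣ Q := by
        have := (Polynomial.dvd_iff_isRoot (p := Q) (a := -Polynomial.X)).mpr hQ0
        rwa [map_neg, sub_neg_eq_add] at this
      obtain ⟨R, hR⟩ := d2
      refine ⟨eE.symm R, ?_⟩
      apply eE.injective
      rw [map_mul, hQ, hR, AlgEquiv.apply_symm_apply, map_mul, map_add, eE_X1, eE_X0]
      ring
    · rintro ⟨c, rfl⟩
      constructor <;> · rw [map_mul, map_mul, map_add, eE_X1, eE_X0] <;> simp [Polynomial.eval_mul]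
  have hrange : substHom.range = fiberProd := by
    ext p
    constructor
    · rintro ⟨h, rfl⟩
      show Polynomial.eval 0 (aeval ![Polynomial.X, 0] h) =
        Polynomial.eval 0 (aeval ![Polynomial.X, -Polynomial.X] h)
      have : ((Polynomial.evalRingHom (0 : ℤ)).comp
          ((aeval ![Polynomial.X, 0] : MvPolynomial (Fin 2) ℤ →ₐ[ℤ] Polynomial ℤ) :
            MvPolynomial (Fin 2) ℤ →+* Polynomial ℤ)) =
          ((Polynomial.evalRingHom (0 : ℤ)).comp
          ((aeval ![Polynomial.X, -Polynomial.X] : MvPolynomial (Fin 2) ℤ →ₐ[ℤ] Polynomial ℤ) :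
            MvPolynomial (Fin 2) ℤ →+* Polynomial ℤ)) := by
        apply MvPolynomial.ringHom_ext
        · intro r; simp
        · intro i
          refine Fin.cases ?_ (fun j => ?_) i
          · simp
          · have : (j.succ : Fin 2) = 1 := by fin_cases j; rfl
            rw [this]; simp
      exact congrArg (fun f => f h) (congrArg DFunLike.coe this)
    · rintro hp
      obtain ⟨f, g⟩ := p
      have hp' : f.eval 0 = g.eval 0 := hp
      refine ⟨Polynomial.aeval (X 0 + X 1 : MvPolynomial (Fin 2) ℤ) f -
        X 1 * Polynomial.aeval (X 0 : MvPolynomial (Fin 2) ℤ) g.divX, ?_⟩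
      have c1 : aeval ![Polynomial.X, (0 : Polynomial ℤ)]
          (Polynomial.aeval (X 0 + X 1 : MvPolynomial (Fin 2) ℤ) f -
            X 1 * Polynomial.aeval (X 0 : MvPolynomial (Fin 2) ℤ) g.divX) = f := by
        rw [map_sub, map_mul, ← Polynomial.aeval_algHom_apply, ← Polynomial.aeval_algHom_apply]
        simp [Polynomial.aeval_X_left_apply]
      have c2 : aeval ![Polynomial.X, -Polynomial.X]
          (Polynomial.aeval (X 0 + X 1 : MvPolynomial (Fin 2) ℤ) f -
            X 1 * Polynomial.aeval (X 0 : MvPolynomial (Fin 2) ℤ) g.divX) = g := by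
        rw [map_sub, map_mul, ← Polynomial.aeval_algHom_apply, ← Polynomial.aeval_algHom_apply]
        simp only [map_add, aeval_X, Matrix.cons_val_zero, Matrix.cons_val_one, Matrix.head_cons,
          add_neg_cancel, Polynomial.aeval_X_left_apply, neg_mul, sub_neg_eq_add]
        rw [Polynomial.aeval_def, Polynomial.eval₂_at_zero]
        have hc : f.coeff 0 = g.coeff 0 := by
          rw [Polynomial.coeff_zero_eq_eval_zero, Polynomial.coeff_zero_eq_eval_zero]; exact hp'
        rw [hc, Polynomial.algebraMap_eq,
          add_comm]
        exact Polynomial.X_mul_divX_add g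
      exact Prod.ext c1 c2
  refine ⟨hker, hrange, ?_⟩
  rw [← hker, ← hrange]
  exact ⟨RingHom.quotientKerEquivRange substHom⟩
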